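/- For the 4-stage fourth-order coefficients of Castella et al. type with a₁ = a₂ = 1/4: the complex weights (b₁, b₂, b₃, b₂, b₁) at nodes (0, 1/4, 1/2, 3/4, 1) solving Σwᵢ = 1, Σwᵢcᵢ(1−cᵢ) = 1/6, Σ(1/2)wᵢ²cᵢ + Σ_{i<j}wᵢwⱼcⱼ = 1/3 come in exactly one complex-conjugate pair of solutions (b₁,b₂,b₃) ∈ ℂ³ with b₃ = 1 − 2b₁ − 2b₂. -/
import Mathlib


open Complex

/-- The order conditions for the symmetric 4-stage BAB composition with nodes
`(0, 1/4, 1/2, 3/4, 1)` and weights `(b₁, b₂, b₃, b₂, b₁)`. -/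
def babOrder4Conditions (q : ℂ × ℂ × ℂ) : Prop :=
  let b₁ := q.1; let b₂ := q.2.1; let b₃ := q.2.2
  let c₁ : ℂ := 0; let c₂ : ℂ := 1 / 4; let c₃ : ℂ := 1 / 2
  let c₄ : ℂ := 3 / 4; let c₅ : ℂ := 1
  (2 * (b₁ + b₂) + b₃ = 1) ∧
  (b₁ * c₁ * (1 - c₁) + b₂ * c₂ * (1 - c₂) + b₃ * c₃ * (1 - c₃)
    + b₂ * c₄ * (1 - c₄) + b₁ * c₅ * (1 - c₅) = 1 / 6) ∧
  ((1 / 2) * (b₁ ^ 2 * c₁ + b₂ ^ 2 * c₂ + b₃ ^ 2 * c₃ + b₂ ^ 2 * c₄ + b₁ ^ 2 * c₅)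
    + (b₁ * b₂ * c₂ + b₁ * b₃ * c₃ + b₁ * b₂ * c₄ + b₁ * b₁ * c₅
      + b₂ * b₃ * c₃ + b₂ * b₂ * c₄ + b₂ * b₁ * c₅
      + b₃ * b₂ * c₄ + b₃ * b₁ * c₅
      + b₂ * b₁ * c₅) = 1 / 3)

theorem stmt_18 :
    ∃ p : ℂ × ℂ × ℂ,
      {q : ℂ × ℂ × ℂ | babOrder4Conditions q}
        = {p, (starRingEnd ℂ p.1, starRingEnd ℂ p.2.1, starRingEnd ℂ p.2.2)} ∧
      p ≠ (starRingEnd ℂ p.1, starRingEnd ℂ p.2.1, starRingEnd ℂ p.2.2) := by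
  refine ⟨(1/10 - I/30, 4/15 + 2/15*I, 4/15 - I/5), ?_, ?_⟩
  · ext ⟨b₁, b₂, b₃⟩
    simp only [Set.mem_setOf_eq, Set.mem_insert_iff, Set.mem_singleton_iff,
      babOrder4Conditions, Prod.mk.injEq, map_sub, map_add, map_div₀, map_mul,
      map_one, map_ofNat, Complex.conj_I]
    constructor
    · rintro ⟨h1, h2, h3⟩
      have hb1 : b₁ = 1/6 - b₂/4 := by linear_combination (1/2) * h1 - 2 * h2
      have hb3 : b₃ = 2/3 - 3/2 * b₂ := by linear_combination 4 * h2
      subst hb1 hb3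
      have hq : (b₂ - (4/15 + 2/15*I)) * (b₂ - (4/15 - 2/15*I)) = 0 := by
        linear_combination (-32/5) * h3 - (4/225) * Complex.I_sq
      rcases mul_eq_zero.mp hq with h | h
      · left
        have hb2 : b₂ = 4/15 + 2/15*I := by linear_combination h
        subst hb2
        refine ⟨by ring, by ring, by ring⟩
      · right
        have hb2 : b₂ = 4/15 - 2/15*I := by linear_combination h
        subst hb2
        refine ⟨by ring, by ring, by ring⟩
    · rintro (⟨h1, h2, h3⟩ | ⟨h1, h2, h3⟩) <;> subst h1 h2 h3 <;>
        exact ⟨by ring, by ring, by linear_combination (-1/360) * Complex.I_sq⟩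
  · intro h
    have := congrArg (fun q : ℂ × ℂ × ℂ => (q.2.1).im) h
    simp only [map_sub, map_add, map_div₀, map_mul, map_one, map_ofNat,
      Complex.conj_I] at this
    simp [Complex.ext_iff] at this
    norm_num at this
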